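/- Let λ₁, λ₂ > 0 with λ₁ ≠ λ₂, set s₃ = 2λ₁λ₂(λ₁+λ₂), a₁(Δ) = e^{−λ₁Δ} + e^{−λ₂Δ}, a₂(Δ) = −e^{−(λ₁+λ₂)Δ}, and S(Δ) = (1+a₁−a₂)(1−a₁−a₂)(1+a₂)/(1−a₂). Let A < B and let f be twice continuously differentiable in a neighborhood of A with f(A) ≠ 0. Then lim_{Δ→0⁺} Δ·( −a₁(Δ) f(A) + (1+a₁(Δ)²) f(A+Δ) + (a₁(Δ)a₂(Δ) − a₁(Δ)) f(A+2Δ) − a₂(Δ) f(A+3Δ) ) / (S(Δ) f(A+Δ)) = −(f''(A) − (λ₁+λ₂) f'(A) + λ₁λ₂ f(A)) / (s₃ f(A)). -/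

import Mathlib

open Filter

open scoped Topology

/-- Basic slope limit: `(1 - exp(-l Δ))/Δ → l` as `Δ → 0⁺`. -/
lemma ar2_aux_slope (l : ℝ) :
    Tendsto (fun Δ : ℝ => (1 - Real.exp (-l * Δ)) / Δ)
      (nhdsWithin 0 (Set.Ioi 0)) (nhds l) := by
  have h1 : HasDerivAt (fun x : ℝ => -l * x) (-l) 0 := by
    simpa using (hasDerivAt_id (0 : ℝ)).const_mul (-l)
  have hd : HasDerivAt (fun x : ℝ => Real.exp (-l * x)) (-l) 0 := by
    simpa using h1.exp
  have hs := hasDerivAt_iff_tendsto_slope.mp hd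
  have h2 : Tendsto (fun Δ : ℝ => (Real.exp (-l * Δ) - 1) / Δ)
      (nhdsWithin 0 {(0 : ℝ)}ᶜ) (nhds (-l)) := by
    simpa [slope_fun_def, Real.exp_zero, div_eq_inv_mul, neg_mul] using hs
  have h3 : Tendsto (fun Δ : ℝ => (Real.exp (-l * Δ) - 1) / Δ)
      (nhdsWithin 0 (Set.Ioi 0)) (nhds (-l)) :=
    h2.mono_left (nhdsWithin_mono 0 (fun x hx => ne_of_gt hx))
  have h4 := h3.neg
  rw [neg_neg] at h4
  refine h4.congr fun Δ => ?_
  rw [← neg_div, neg_sub]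

/-- Scaling preserves the right-neighborhood filter at `0`. -/
lemma ar2_aux_scale {k : ℝ} (hk : 0 < k) :
    Tendsto (fun Δ : ℝ => k * Δ) (nhdsWithin 0 (Set.Ioi 0))
      (nhdsWithin 0 (Set.Ioi 0)) := by
  rw [tendsto_nhdsWithin_iff]
  constructor
  · have : Tendsto (fun Δ : ℝ => k * Δ) (nhds 0) (nhds (k * 0)) :=
      (continuous_const.mul continuous_id).tendsto 0
    rw [mul_zero] at this
    exact this.mono_left nhdsWithin_le_nhds
  · exact eventually_mem_nhdsWithin.mono fun x hx => mul_pos hk hx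

/-- Second-order Taylor remainder estimate from the right. -/
lemma ar2_aux_taylor {f : ℝ → ℝ} {A : ℝ} (hf : ContDiffAt ℝ 2 f A) :
    Tendsto (fun h : ℝ =>
        (f (A + h) - (f A + deriv f A * h + deriv (deriv f) A * h ^ 2 / 2)) / h ^ 2)
      (nhdsWithin 0 (Set.Ioi 0)) (nhds 0) := by
  -- differentiability of `f` near `A`
  have hev : ∀ᶠ y in nhds A, DifferentiableAt ℝ f y :=
    (hf.eventually (by norm_num)).mono fun y hy => hy.differentiableAt two_ne_zero
  -- differentiability of `deriv f` at `A`
  have hdf' : DifferentiableAt ℝ (deriv f) A := by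
    obtain ⟨u, hu, hcdo⟩ := hf.contDiffOn le_rfl (by norm_num)
    obtain ⟨t, htu, ht, hAt⟩ := mem_nhds_iff.mp hu
    have h2 : ContDiffOn ℝ 2 f t := hcdo.mono htu
    have h3 : ContDiffOn ℝ 1 (deriv f) t :=
      h2.deriv_of_isOpen ht (by norm_num)
    exact (h3.contDiffAt (ht.mem_nhds hAt)).differentiableAt one_ne_zero
  have hAadd : Tendsto (fun h : ℝ => A + h) (nhds 0) (nhds A) := by
    have : Tendsto (fun h : ℝ => A + h) (nhds 0) (nhds (A + 0)) :=
      (continuous_const.add continuous_id).tendsto 0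
    simpa using this
  -- eventual differentiability of the shifted function
  have hevs : ∀ᶠ h in nhdsWithin (0 : ℝ) (Set.Ioi 0), DifferentiableAt ℝ f (A + h) :=
    (hAadd.mono_left nhdsWithin_le_nhds).eventually hev
  set c₁ := deriv f A with hc₁d
  set c₂ := deriv (deriv f) A with hc₂d
  -- L'Hôpital
  apply HasDerivAt.lhopital_zero_nhdsGT
      (f' := fun h => deriv f (A + h) - c₁ - c₂ * h) (g' := fun h => 2 * h)
  · refine hevs.mono fun h hh => ?_
    have hshift : HasDerivAt (fun x : ℝ => A + x) 1 h := by
      simpa using (hasDerivAt_id h).const_add A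
    have h1 : HasDerivAt (fun x : ℝ => f (A + x)) (deriv f (A + h) * 1) h :=
      (hh.hasDerivAt).comp h hshift
    have h2 : HasDerivAt (fun x : ℝ => f A + c₁ * x + c₂ * x ^ 2 / 2)
        (c₁ + c₂ * h) h := by
      have ha : HasDerivAt (fun x : ℝ => f A + c₁ * x) c₁ h := by
        simpa using ((hasDerivAt_id h).const_mul c₁).const_add (f A)
      have hb : HasDerivAt (fun x : ℝ => c₂ * x ^ 2 / 2) (c₂ * (2 * h ^ 1) / 2) h := by
        exact (((hasDerivAt_pow 2 h).const_mul c₂).div_const 2)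
      have := ha.add hb
      exact this.congr_deriv (by ring)
    have := h1.sub h2
    exact this.congr_deriv (by ring)
  · refine Eventually.of_forall fun h => ?_
    simpa using hasDerivAt_pow 2 h
  · exact eventually_mem_nhdsWithin.mono fun h hh => by
      have h0 : (0:ℝ) < h := hh
      positivity
  · have hcf : Tendsto (fun h : ℝ => f (A + h)) (nhds 0) (nhds (f A)) :=
      hf.continuousAt.tendsto.comp hAadd
    have hpoly : Tendsto (fun h : ℝ => f A + c₁ * h + c₂ * h ^ 2 / 2)
        (nhds 0) (nhds (f A)) := by
      have : Continuous fun h : ℝ => f A + c₁ * h + c₂ * h ^ 2 / 2 := by continuity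
      have := this.tendsto 0
      simpa using this
    have := (hcf.sub hpoly).mono_left
      (nhdsWithin_le_nhds : nhdsWithin (0:ℝ) (Set.Ioi 0) ≤ nhds 0)
    simpa using this
  · have : Tendsto (fun h : ℝ => h ^ 2) (nhds 0) (nhds 0) := by
      have := (continuous_pow 2).tendsto (0 : ℝ)
      simpa using this
    exact this.mono_left nhdsWithin_le_nhds
  · -- the quotient of derivatives tends to 0
    have hslope := hasDerivAt_iff_tendsto_slope.mp hdf'.hasDerivAt
    have hmap : Tendsto (fun h : ℝ => A + h) (nhdsWithin 0 (Set.Ioi 0))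
        (nhdsWithin A {A}ᶜ) := by
      rw [tendsto_nhdsWithin_iff]
      exact ⟨hAadd.mono_left nhdsWithin_le_nhds,
        eventually_mem_nhdsWithin.mono fun x hx => by
          simp only [Set.mem_compl_iff, Set.mem_singleton_iff]
          intro hc; rw [add_eq_left] at hc; exact (ne_of_gt hx) hc⟩
    have h1 : Tendsto (fun h : ℝ => (deriv f (A + h) - c₁) / h)
        (nhdsWithin 0 (Set.Ioi 0)) (nhds c₂) := by
      have := hslope.comp hmap
      refine this.congr fun h => ?_
      simp [slope_fun_def, Function.comp, div_eq_inv_mul, hc₁d]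
    have h2 : Tendsto (fun h : ℝ => ((deriv f (A + h) - c₁) / h - c₂) / 2)
        (nhdsWithin 0 (Set.Ioi 0)) (nhds 0) := by
      have hsub : Tendsto (fun h : ℝ => (deriv f (A + h) - c₁) / h - c₂)
          (nhdsWithin 0 (Set.Ioi 0)) (nhds (c₂ - c₂)) :=
        h1.sub (tendsto_const_nhds (x := c₂))
      have := hsub.div_const 2
      simpa using this
    refine tendsto_nhdsWithin_congr (fun h hh => ?_) h2
    have hne : (h : ℝ) ≠ 0 := ne_of_gt hh
    field_simp

/-- Limit of the scaled second AR(2) boundary weight of exponential type: as `Δ → 0⁺`,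
`Δ(-a₁f(A) + (1+a₁²)f(A+Δ) + (a₁a₂-a₁)f(A+2Δ) - a₂f(A+3Δ))/(S(Δ) f(A+Δ))`
tends to `-Q_A = -(f''(A) - (λ₁+λ₂)f'(A) + λ₁λ₂ f(A))/(s₃ f(A))`. -/
theorem ar2_exp_second_boundary_limit (l₁ l₂ : ℝ) (h₁ : 0 < l₁) (h₂ : 0 < l₂)
    (hne : l₁ ≠ l₂)
    (s₃ : ℝ) (hs₃ : s₃ = 2 * l₁ * l₂ * (l₁ + l₂))
    (a₁ a₂ S : ℝ → ℝ)
    (ha₁ : ∀ Δ, a₁ Δ = Real.exp (-l₁ * Δ) + Real.exp (-l₂ * Δ))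
    (ha₂ : ∀ Δ, a₂ Δ = -Real.exp (-(l₁ + l₂) * Δ))
    (hS : ∀ Δ, S Δ = (1 + a₁ Δ - a₂ Δ) * (1 - a₁ Δ - a₂ Δ) * (1 + a₂ Δ) / (1 - a₂ Δ))
    (A B : ℝ) (hAB : A < B) (f : ℝ → ℝ)
    (hfA : ContDiffAt ℝ 2 f A) (hA0 : f A ≠ 0) :
    Tendsto (fun Δ =>
        Δ * (-(a₁ Δ) * f A + (1 + (a₁ Δ) ^ 2) * f (A + Δ)
              + (a₁ Δ * a₂ Δ - a₁ Δ) * f (A + 2 * Δ) - a₂ Δ * f (A + 3 * Δ))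
          / (S Δ * f (A + Δ)))
      (nhdsWithin 0 (Set.Ioi 0))
      (nhds (-(deriv (deriv f) A - (l₁ + l₂) * deriv f A + l₁ * l₂ * f A) / (s₃ * f A))) := by
  have hσ : (0 : ℝ) < l₁ + l₂ := by linarith
  set c₁ := deriv f A with hc₁
  set c₂ := deriv (deriv f) A with hc₂
  set P : ℝ → ℝ := fun Δ => Real.exp (-l₁ * Δ) with hP
  set Q : ℝ → ℝ := fun Δ => Real.exp (-l₂ * Δ) with hQ
  set r : ℝ → ℝ := fun h => f (A + h) - (f A + c₁ * h + c₂ * h ^ 2 / 2) with hrdef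
  have hfh : ∀ h : ℝ, f (A + h) = f A + c₁ * h + c₂ * h ^ 2 / 2 + r h := by
    intro h; simp [hrdef]
  -- basic limits
  have hp : Tendsto P (nhdsWithin 0 (Set.Ioi 0)) (nhds 1) := by
    have : Continuous P := by fun_prop
    have := this.tendsto 0
    simp only [hP, mul_zero, Real.exp_zero] at this
    exact this.mono_left nhdsWithin_le_nhds
  have hq : Tendsto Q (nhdsWithin 0 (Set.Ioi 0)) (nhds 1) := by
    have : Continuous Q := by fun_prop
    have := this.tendsto 0
    simp only [hQ, mul_zero, Real.exp_zero] at this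
    exact this.mono_left nhdsWithin_le_nhds
  have hu : Tendsto (fun Δ => (1 - P Δ) / Δ) (nhdsWithin 0 (Set.Ioi 0)) (nhds l₁) :=
    ar2_aux_slope l₁
  have hv : Tendsto (fun Δ => (1 - Q Δ) / Δ) (nhdsWithin 0 (Set.Ioi 0)) (nhds l₂) :=
    ar2_aux_slope l₂
  have hw : Tendsto (fun Δ => (1 - P Δ * Q Δ) / Δ) (nhdsWithin 0 (Set.Ioi 0))
      (nhds (l₁ + l₂)) := by
    refine (ar2_aux_slope (l₁ + l₂)).congr fun Δ => ?_
    rw [hP, hQ]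
    rw [← Real.exp_add]
    ring_nf
  have hr0 : Tendsto (fun Δ => r Δ / Δ ^ 2) (nhdsWithin 0 (Set.Ioi 0)) (nhds 0) :=
    ar2_aux_taylor hfA
  have hr2 : Tendsto (fun Δ => r (2 * Δ) / (2 * Δ) ^ 2)
      (nhdsWithin 0 (Set.Ioi 0)) (nhds 0) := hr0.comp (ar2_aux_scale two_pos)
  have hr3 : Tendsto (fun Δ => r (3 * Δ) / (3 * Δ) ^ 2)
      (nhdsWithin 0 (Set.Ioi 0)) (nhds 0) := hr0.comp (ar2_aux_scale three_pos)
  have hfc : Tendsto (fun Δ => f (A + Δ)) (nhdsWithin 0 (Set.Ioi 0)) (nhds (f A)) := by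
    have hAadd : Tendsto (fun h : ℝ => A + h) (nhds 0) (nhds A) := by
      have : Tendsto (fun h : ℝ => A + h) (nhds 0) (nhds (A + 0)) :=
        (continuous_const.add continuous_id).tendsto 0
      simpa using this
    exact (hfA.continuousAt.tendsto.comp hAadd).mono_left nhdsWithin_le_nhds
  -- numerator limit
  set N : ℝ → ℝ := fun Δ =>
      (-(a₁ Δ) * f A + (1 + (a₁ Δ) ^ 2) * f (A + Δ)
        + (a₁ Δ * a₂ Δ - a₁ Δ) * f (A + 2 * Δ) - a₂ Δ * f (A + 3 * Δ)) / Δ ^ 2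
    with hNdef
  have hNum : Tendsto N (nhdsWithin 0 (Set.Ioi 0))
      (nhds (-(c₂ - (l₁ + l₂) * c₁ + l₁ * l₂ * f A))) := by
    have hModel : Tendsto (fun Δ =>
        f A * (1 - (P Δ + Q Δ)) * ((1 - P Δ) / Δ) * ((1 - Q Δ) / Δ)
        + c₁ * (((1 - P Δ) / Δ) * (1 - (1 - P Δ) - 3 * (1 - Q Δ) + 2 * (1 - P Δ) * (1 - Q Δ))
                + ((1 - Q Δ) / Δ) * (1 - (1 - Q Δ) + 2 * (1 - P Δ) * (1 - Q Δ)))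
        + c₂ * ((1 + (P Δ + Q Δ) ^ 2) / 2 + 2 * ((P Δ + Q Δ) * (-(P Δ * Q Δ)) - (P Δ + Q Δ))
                - 9 * (-(P Δ * Q Δ)) / 2)
        + (1 + (P Δ + Q Δ) ^ 2) * (r Δ / Δ ^ 2)
        + ((P Δ + Q Δ) * (-(P Δ * Q Δ)) - (P Δ + Q Δ)) * 4 * (r (2 * Δ) / (2 * Δ) ^ 2)
        - (-(P Δ * Q Δ)) * 9 * (r (3 * Δ) / (3 * Δ) ^ 2))
        (nhdsWithin 0 (Set.Ioi 0))
        (nhds (-(c₂ - (l₁ + l₂) * c₁ + l₁ * l₂ * f A))) := by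
      have T0 : Tendsto (fun Δ => f A * (1 - (P Δ + Q Δ)) * ((1 - P Δ) / Δ) * ((1 - Q Δ) / Δ))
          (nhdsWithin 0 (Set.Ioi 0)) (nhds (f A * (1 - (1 + 1)) * l₁ * l₂)) :=
        ((tendsto_const_nhds.mul (tendsto_const_nhds.sub (hp.add hq))).mul hu).mul hv
      have T1 : Tendsto (fun Δ =>
          c₁ * (((1 - P Δ) / Δ) * (1 - (1 - P Δ) - 3 * (1 - Q Δ) + 2 * (1 - P Δ) * (1 - Q Δ))
              + ((1 - Q Δ) / Δ) * (1 - (1 - Q Δ) + 2 * (1 - P Δ) * (1 - Q Δ))))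
          (nhdsWithin 0 (Set.Ioi 0))
          (nhds (c₁ * (l₁ * (1 - (1 - 1) - 3 * (1 - 1) + 2 * (1 - 1) * (1 - 1))
              + l₂ * (1 - (1 - 1) + 2 * (1 - 1) * (1 - 1))))) := by
        apply Tendsto.const_mul
        exact (hu.mul (((tendsto_const_nhds.sub (tendsto_const_nhds.sub hp)).sub
            (tendsto_const_nhds.mul (tendsto_const_nhds.sub hq))).add
            ((tendsto_const_nhds.mul (tendsto_const_nhds.sub hp)).mul
              (tendsto_const_nhds.sub hq)))).add
          (hv.mul ((tendsto_const_nhds.sub (tendsto_const_nhds.sub hq)).add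
            ((tendsto_const_nhds.mul (tendsto_const_nhds.sub hp)).mul
              (tendsto_const_nhds.sub hq))))
      have T2 : Tendsto (fun Δ =>
          c₂ * ((1 + (P Δ + Q Δ) ^ 2) / 2 + 2 * ((P Δ + Q Δ) * (-(P Δ * Q Δ)) - (P Δ + Q Δ))
              - 9 * (-(P Δ * Q Δ)) / 2))
          (nhdsWithin 0 (Set.Ioi 0))
          (nhds (c₂ * ((1 + (1 + 1) ^ 2) / 2 + 2 * ((1 + 1) * (-(1 * 1)) - (1 + 1))
              - 9 * (-(1 * 1)) / 2))) := by
        apply Tendsto.const_mul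
        exact (((tendsto_const_nhds.add ((hp.add hq).pow 2)).div_const 2).add
            (tendsto_const_nhds.mul (((hp.add hq).mul (hp.mul hq).neg).sub (hp.add hq)))).sub
          ((tendsto_const_nhds.mul (hp.mul hq).neg).div_const 2)
      have T3 : Tendsto (fun Δ => (1 + (P Δ + Q Δ) ^ 2) * (r Δ / Δ ^ 2))
          (nhdsWithin 0 (Set.Ioi 0)) (nhds ((1 + (1 + 1) ^ 2) * 0)) :=
        (tendsto_const_nhds.add ((hp.add hq).pow 2)).mul hr0
      have T4 : Tendsto (fun Δ =>
          ((P Δ + Q Δ) * (-(P Δ * Q Δ)) - (P Δ + Q Δ)) * 4 * (r (2 * Δ) / (2 * Δ) ^ 2))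
          (nhdsWithin 0 (Set.Ioi 0))
          (nhds (((1 + 1) * (-(1 * 1)) - (1 + 1)) * 4 * 0)) :=
        ((((hp.add hq).mul (hp.mul hq).neg).sub (hp.add hq)).mul tendsto_const_nhds).mul hr2
      have T5 : Tendsto (fun Δ => (-(P Δ * Q Δ)) * 9 * (r (3 * Δ) / (3 * Δ) ^ 2))
          (nhdsWithin 0 (Set.Ioi 0)) (nhds ((-(1 * 1)) * 9 * 0)) :=
        ((hp.mul hq).neg.mul tendsto_const_nhds).mul hr3
      have := ((((T0.add T1).add T2).add T3).add T4).sub T5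
      convert this using 2
      ring
    refine tendsto_nhdsWithin_congr (fun Δ hΔ => ?_) hModel
    have hΔ0 : (Δ : ℝ) ≠ 0 := ne_of_gt hΔ
    simp only [hNdef]
    rw [ha₁, ha₂, hfh Δ, hfh (2 * Δ), hfh (3 * Δ)]
    rw [show -(l₁ + l₂) * Δ = -l₁ * Δ + -l₂ * Δ by ring, Real.exp_add]
    rw [hP, hQ]
    field_simp
    ring
  -- denominator limit
  set D : ℝ → ℝ := fun Δ => S Δ / Δ ^ 3 * f (A + Δ) with hDdef
  have hDen : Tendsto D (nhdsWithin 0 (Set.Ioi 0)) (nhds (s₃ * f A)) := by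
    have hSS : Tendsto (fun Δ => S Δ / Δ ^ 3) (nhdsWithin 0 (Set.Ioi 0)) (nhds s₃) := by
      have hModel : Tendsto (fun Δ =>
          (1 + (P Δ + Q Δ) + P Δ * Q Δ) * ((1 - P Δ) / Δ) * ((1 - Q Δ) / Δ)
            * ((1 - P Δ * Q Δ) / Δ) / (1 + P Δ * Q Δ))
          (nhdsWithin 0 (Set.Ioi 0))
          (nhds ((1 + (1 + 1) + 1 * 1) * l₁ * l₂ * (l₁ + l₂) / (1 + 1 * 1))) := by
        refine Tendsto.div ?_ (tendsto_const_nhds.add (hp.mul hq)) (by norm_num)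
        exact ((((tendsto_const_nhds.add (hp.add hq)).add (hp.mul hq)).mul hu).mul hv).mul hw
      have heq : ∀ Δ ∈ Set.Ioi (0 : ℝ),
          (1 + (P Δ + Q Δ) + P Δ * Q Δ) * ((1 - P Δ) / Δ) * ((1 - Q Δ) / Δ)
            * ((1 - P Δ * Q Δ) / Δ) / (1 + P Δ * Q Δ) = S Δ / Δ ^ 3 := by
        intro Δ hΔ
        have hΔ0 : (Δ : ℝ) ≠ 0 := ne_of_gt hΔ
        have hpq : (0 : ℝ) < 1 + P Δ * Q Δ := by
          have := Real.exp_pos (-l₁ * Δ)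
          have := Real.exp_pos (-l₂ * Δ)
          rw [hP, hQ]; positivity
        rw [hS, ha₁, ha₂]
        rw [show -(l₁ + l₂) * Δ = -l₁ * Δ + -l₂ * Δ by ring, Real.exp_add]
        rw [hP, hQ]
        rw [hP, hQ] at hpq
        simp only at hpq ⊢
        generalize Real.exp (-l₁ * Δ) = x at hpq ⊢
        generalize Real.exp (-l₂ * Δ) = y at hpq ⊢
        simp only [sub_neg_eq_add]
        field_simp
        ring
      have := tendsto_nhdsWithin_congr heq hModel
      convert this using 2
      rw [hs₃]; norm_num; ring
    exact hSS.mul hfc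
  -- assemble
  have hne0 : s₃ * f A ≠ 0 := by
    have : (0 : ℝ) < s₃ := by rw [hs₃]; positivity
    exact mul_ne_zero (ne_of_gt this) hA0
  have hfinal := hNum.div hDen hne0
  refine tendsto_nhdsWithin_congr (fun Δ hΔ => ?_) hfinal
  have hΔ0 : (Δ : ℝ) ≠ 0 := ne_of_gt hΔ
  simp only [Pi.div_apply, hNdef, hDdef]
  rw [div_mul_eq_mul_div, div_div_eq_mul_div, div_mul_eq_mul_div]
  congr 1
  field_simp
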